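/- Let P₁ and P₂ be Borel probability measures on ℝ with quantile functions Q₁ and Q₂. For any coupling (X, Y) of P₁ and P₂ (random variables on a common probability space with X ~ P₁, Y ~ P₂), ess sup |X − Y| ≥ sup_{t ∈ (0,1)} |Q₁(t) − Q₂(t)|, and the comonotone coupling (Q₁(Z), Q₂(Z)) with Z uniform on (0,1) achieves this bound. -/

import Mathlib

open MeasureTheory Set

section QCMHelpers

open Filter Topology

private lemma qcm_F_mono (P : Measure ℝ) [IsProbabilityMeasure P] :
    Monotone (fun y => (P (Iic y)).toReal) := fun a b hab =>
  ENNReal.toReal_mono (measure_ne_top _ _) (measure_mono (Iic_subset_Iic.2 hab))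

private lemma qcm_F_nonneg (P : Measure ℝ) (y : ℝ) : 0 ≤ (P (Iic y)).toReal :=
  ENNReal.toReal_nonneg

private lemma qcm_F_le_one (P : Measure ℝ) [IsProbabilityMeasure P] (y : ℝ) :
    (P (Iic y)).toReal ≤ 1 := by
  have h : P (Iic y) ≤ 1 := prob_le_one
  have := ENNReal.toReal_mono (by simp) h
  simpa using this

/-- Right continuity of the CDF. -/
private lemma qcm_le_F_of_forall_lt (P : Measure ℝ) [IsProbabilityMeasure P] {t y : ℝ}
    (h : ∀ z, y < z → t ≤ (P (Iic z)).toReal) : t ≤ (P (Iic y)).toReal := by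
  have hInt : ⋂ n : ℕ, Iic (y + 1 / ((n : ℝ) + 1)) = Iic y := by
    ext x
    simp only [mem_iInter, mem_Iic]
    constructor
    · intro hx
      by_contra hxy
      push_neg at hxy
      obtain ⟨n, hn⟩ := exists_nat_one_div_lt (sub_pos.2 hxy)
      have := hx n
      linarith
    · intro hx n
      have h0 : (0:ℝ) < 1 / ((n : ℝ) + 1) := by positivity
      linarith
  have hanti : Antitone fun n : ℕ => Iic (y + 1 / ((n : ℝ) + 1)) := by
    intro m n hmn
    apply Iic_subset_Iic.2
    have hm : (0:ℝ) < (m : ℝ) + 1 := by positivity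
    have hcast : (m : ℝ) + 1 ≤ (n : ℝ) + 1 := by
      have : (m : ℝ) ≤ (n : ℝ) := Nat.cast_le.2 hmn
      linarith
    have := one_div_le_one_div_of_le hm hcast
    linarith
  have htend := tendsto_measure_iInter_atTop (μ := P)
    (fun n => measurableSet_Iic.nullMeasurableSet) hanti ⟨0, measure_ne_top P _⟩
  rw [hInt] at htend
  have htend2 : Tendsto (fun n : ℕ => (P (Iic (y + 1 / ((n : ℝ) + 1)))).toReal) atTop
      (𝓝 (P (Iic y)).toReal) :=
    (ENNReal.tendsto_toReal (measure_ne_top P _)).comp htend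
  refine ge_of_tendsto' htend2 fun n => h _ ?_
  have h0 : (0:ℝ) < 1 / ((n : ℝ) + 1) := by positivity
  linarith

private lemma qcm_exists_F_lt (P : Measure ℝ) [IsProbabilityMeasure P] {t : ℝ} (ht : 0 < t) :
    ∃ z : ℝ, (P (Iic z)).toReal < t := by
  have hInt : ⋂ n : ℕ, Iic (-(n : ℝ)) = ∅ := by
    ext x
    simp only [mem_iInter, mem_Iic, mem_empty_iff_false, iff_false]
    push_neg
    obtain ⟨n, hn⟩ := exists_nat_gt (-x)
    exact ⟨n, by linarith⟩
  have hanti : Antitone fun n : ℕ => Iic (-(n : ℝ)) := by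
    intro m n hmn
    apply Iic_subset_Iic.2
    have : (m : ℝ) ≤ (n : ℝ) := Nat.cast_le.2 hmn
    linarith
  have htend := tendsto_measure_iInter_atTop (μ := P)
    (fun n => measurableSet_Iic.nullMeasurableSet) hanti ⟨0, measure_ne_top P _⟩
  rw [hInt, measure_empty] at htend
  have htend2 : Tendsto (fun n : ℕ => (P (Iic (-(n : ℝ)))).toReal) atTop (𝓝 (0:ℝ)) := by
    have := (ENNReal.tendsto_toReal (a := 0) (by simp)).comp htend
    simpa [Function.comp_def] using this
  obtain ⟨n, hn⟩ := (htend2.eventually (eventually_lt_nhds ht)).exists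
  exact ⟨-(n : ℝ), hn⟩

private lemma qcm_bddBelow (P : Measure ℝ) [IsProbabilityMeasure P] {t : ℝ} (ht : 0 < t) :
    BddBelow {y : ℝ | t ≤ (P (Iic y)).toReal} := by
  obtain ⟨z, hz⟩ := qcm_exists_F_lt P ht
  refine ⟨z, fun y hy => ?_⟩
  by_contra hzy
  push_neg at hzy
  have := qcm_F_mono P hzy.le
  simp only [mem_setOf_eq] at hy
  exact absurd (le_trans hy this) (not_le.2 hz)

private lemma qcm_nonempty (P : Measure ℝ) [IsProbabilityMeasure P] {t : ℝ} (ht : t < 1) :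
    {y : ℝ | t ≤ (P (Iic y)).toReal}.Nonempty := by
  have htend : Tendsto (fun x : ℝ => P (Iic x)) atTop (𝓝 (P univ)) :=
    tendsto_measure_Iic_atTop P
  rw [measure_univ] at htend
  have htend2 : Tendsto (fun x : ℝ => (P (Iic x)).toReal) atTop (𝓝 (1:ℝ)) := by
    have := (ENNReal.tendsto_toReal (a := 1) (by simp)).comp htend
    simpa [Function.comp_def] using this
  obtain ⟨z, hz⟩ := (htend2.eventually (eventually_gt_nhds ht)).exists
  exact ⟨z, hz.le⟩

/-- Key: for `t ∈ (0,1)`, `Q t ≤ y ↔ t ≤ F y`. -/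
private lemma qcm_quantile_le_iff (P : Measure ℝ) [IsProbabilityMeasure P] {t y : ℝ}
    (ht0 : 0 < t) (ht1 : t < 1) :
    sInf {y : ℝ | t ≤ (P (Iic y)).toReal} ≤ y ↔ t ≤ (P (Iic y)).toReal := by
  constructor
  · intro h
    refine qcm_le_F_of_forall_lt P fun z hz => ?_
    obtain ⟨w, hw, hwz⟩ := exists_lt_of_csInf_lt (qcm_nonempty P ht1) (lt_of_le_of_lt h hz)
    exact le_trans hw (qcm_F_mono P hwz.le)
  · intro h
    exact csInf_le (qcm_bddBelow P ht0) h

/-- Domination lemma: if `F₂(y - M) ≤ F₁ y` for all `y`, then `Q₁ t ≤ Q₂ t + M`. -/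
private lemma qcm_quantile_dom (P₁ P₂ : Measure ℝ) [IsProbabilityMeasure P₁]
    [IsProbabilityMeasure P₂] {M t : ℝ}
    (hdom : ∀ y : ℝ, (P₂ (Iic (y - M))).toReal ≤ (P₁ (Iic y)).toReal)
    (ht0 : 0 < t) (ht1 : t < 1) :
    sInf {y : ℝ | t ≤ (P₁ (Iic y)).toReal} ≤ sInf {y : ℝ | t ≤ (P₂ (Iic y)).toReal} + M := by
  have h : sInf {y : ℝ | t ≤ (P₁ (Iic y)).toReal} - M ≤
      sInf {y : ℝ | t ≤ (P₂ (Iic y)).toReal} := by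
    refine le_csInf (qcm_nonempty P₂ ht1) fun y hy => ?_
    have h1 : t ≤ (P₁ (Iic (y + M))).toReal := by
      have := hdom (y + M)
      simp only [add_sub_cancel_right] at this
      exact le_trans hy this
    have h2 : sInf {y : ℝ | t ≤ (P₁ (Iic y)).toReal} ≤ y + M :=
      csInf_le (qcm_bddBelow P₁ ht0) h1
    linarith
  linarith

/-- Measure of `Ioo 0 1 ∩ Iic c` for `c ∈ [0,1]`. -/
private lemma qcm_vol_inter {c : ℝ} (hc0 : 0 ≤ c) (hc1 : c ≤ 1) :
    volume (Ioo (0:ℝ) 1 ∩ Iic c) = ENNReal.ofReal c := by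
  rcases eq_or_lt_of_le hc1 with hc | hc
  · have : Ioo (0:ℝ) 1 ∩ Iic c = Ioo (0:ℝ) 1 := by
      apply inter_eq_left.2
      intro x hx
      simp only [mem_Iic]
      rw [hc]
      exact hx.2.le
    rw [this, hc, Real.volume_Ioo]
    norm_num
  · have : Ioo (0:ℝ) 1 ∩ Iic c = Ioc (0:ℝ) c := by
      ext x
      simp only [mem_inter_iff, mem_Ioo, mem_Iic, mem_Ioc]
      constructor
      · rintro ⟨⟨h1, _⟩, h3⟩; exact ⟨h1, h3⟩
      · rintro ⟨h1, h2⟩; exact ⟨⟨h1, lt_of_le_of_lt h2 hc⟩, h2⟩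
    rw [this, Real.volume_Ioc]
    norm_num

end QCMHelpers

/-- Optimality of the comonotone (quantile) coupling for the minimax (L∞) transport cost
on ℝ: any coupling's essential sup distance dominates the sup-norm distance between the
quantile functions, and the quantile coupling achieves it. -/
theorem quantile_coupling_minimax
    (P₁ P₂ : Measure ℝ) [IsProbabilityMeasure P₁] [IsProbabilityMeasure P₂]
    (F₁ F₂ : ℝ → ℝ) (hF₁ : F₁ = fun y => (P₁ (Iic y)).toReal)
    (hF₂ : F₂ = fun y => (P₂ (Iic y)).toReal)
    (Q₁ Q₂ : ℝ → ℝ) (hQ₁ : Q₁ = fun t => sInf {y : ℝ | t ≤ F₁ y})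
    (hQ₂ : Q₂ = fun t => sInf {y : ℝ | t ≤ F₂ y})
    (S : ENNReal) (hS : S = ⨆ t ∈ Ioo (0 : ℝ) 1, ENNReal.ofReal |Q₁ t - Q₂ t|) :
    (∀ (Ω : Type) (_ : MeasurableSpace Ω) (μ : Measure Ω), IsProbabilityMeasure μ →
      ∀ X Y : Ω → ℝ, Measurable X → Measurable Y →
        μ.map X = P₁ → μ.map Y = P₂ →
        S ≤ essSup (fun ω => ENNReal.ofReal |X ω - Y ω|) μ) ∧
      essSup (fun t => ENNReal.ofReal |Q₁ t - Q₂ t|) (volume.restrict (Ioo (0 : ℝ) 1)) = S := by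
  subst hF₁ hF₂
  have hQ₁p : ∀ u : ℝ, Q₁ u = sInf {z : ℝ | u ≤ (P₁ (Iic z)).toReal} := fun u => by
    rw [hQ₁]
  have hQ₂p : ∀ u : ℝ, Q₂ u = sInf {z : ℝ | u ≤ (P₂ (Iic z)).toReal} := fun u => by
    rw [hQ₂]
  constructor
  · -- Part 1: lower bound for any coupling
    intro Ω _ μ hμ X Y hX hY hmapX hmapY
    rw [hS]
    refine iSup₂_le fun t ht => ?_
    set E := essSup (fun ω => ENNReal.ofReal |X ω - Y ω|) μ with hE
    by_cases hEtop : E = ⊤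
    · rw [hEtop]; exact le_top
    set M := E.toReal with hM
    have hM0 : 0 ≤ M := ENNReal.toReal_nonneg
    have hae : ∀ᵐ ω ∂μ, |X ω - Y ω| ≤ M := by
      filter_upwards [ENNReal.ae_le_essSup (fun ω => ENNReal.ofReal |X ω - Y ω|) (μ := μ)]
        with ω hω
      have := ENNReal.toReal_mono hEtop hω
      rwa [ENNReal.toReal_ofReal (abs_nonneg _)] at this
    have key : ∀ (Z W : Ω → ℝ), Measurable Z → Measurable W →
        ∀ (PZ PW : Measure ℝ), μ.map Z = PZ → μ.map W = PW →
        (∀ᵐ ω ∂μ, Z ω - W ω ≤ M) →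
        ∀ y : ℝ, (PW (Iic (y - M))).toReal ≤ (PZ (Iic y)).toReal := by
      intro Z W hZ hW PZ PW hmZ hmW hae' y
      have h1 : PW (Iic (y - M)) = μ (W ⁻¹' Iic (y - M)) := by
        rw [← hmW, Measure.map_apply hW measurableSet_Iic]
      have h2 : PZ (Iic y) = μ (Z ⁻¹' Iic y) := by
        rw [← hmZ, Measure.map_apply hZ measurableSet_Iic]
      have hsub : (W ⁻¹' Iic (y - M)) ≤ᵐ[μ] (Z ⁻¹' Iic y) := by
        filter_upwards [hae'] with ω hω hmem
        have hmem' : W ω ≤ y - M := hmem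
        show Z ω ≤ y
        linarith
      rw [h1, h2]
      exact ENNReal.toReal_mono (measure_ne_top μ _) (measure_mono_ae hsub)
    have hd1 : ∀ y : ℝ, (P₂ (Iic (y - M))).toReal ≤ (P₁ (Iic y)).toReal :=
      key X Y hX hY P₁ P₂ hmapX hmapY
        (by filter_upwards [hae] with ω hω; exact (abs_le.1 hω).2) 
    have hd2 : ∀ y : ℝ, (P₁ (Iic (y - M))).toReal ≤ (P₂ (Iic y)).toReal :=
      key Y X hY hX P₂ P₁ hmapY hmapX
        (by filter_upwards [hae] with ω hω; have := (abs_le.1 hω).1; linarith)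
    have hq1 : Q₁ t ≤ Q₂ t + M := by
      rw [hQ₁p t, hQ₂p t]
      exact qcm_quantile_dom P₁ P₂ hd1 ht.1 ht.2
    have hq2 : Q₂ t ≤ Q₁ t + M := by
      rw [hQ₁p t, hQ₂p t]
      exact qcm_quantile_dom P₂ P₁ hd2 ht.1 ht.2
    have habs : |Q₁ t - Q₂ t| ≤ M := abs_le.2 ⟨by linarith, by linarith⟩
    calc ENNReal.ofReal |Q₁ t - Q₂ t| ≤ ENNReal.ofReal M := ENNReal.ofReal_le_ofReal habs
      _ = E := ENNReal.ofReal_toReal hEtop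
  · -- Part 2: the quantile coupling achieves the bound
    apply le_antisymm
    · -- essSup ≤ S
      refine essSup_le_of_ae_le S ?_
      filter_upwards [ae_restrict_mem measurableSet_Ioo] with t ht
      rw [hS]
      exact le_iSup₂ (f := fun (t : ℝ) (_ : t ∈ Ioo (0:ℝ) 1) => ENNReal.ofReal |Q₁ t - Q₂ t|) t ht
    · -- S ≤ essSup
      set ν := volume.restrict (Ioo (0 : ℝ) 1) with hν
      set E := essSup (fun t => ENNReal.ofReal |Q₁ t - Q₂ t|) ν with hE
      rw [hS]
      refine iSup₂_le fun t ht => ?_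
      by_cases hEtop : E = ⊤
      · rw [hEtop]; exact le_top
      set M := E.toReal with hM
      have hM0 : 0 ≤ M := ENNReal.toReal_nonneg
      have hae : ∀ᵐ s ∂ν, |Q₁ s - Q₂ s| ≤ M := by
        filter_upwards [ENNReal.ae_le_essSup (fun s => ENNReal.ofReal |Q₁ s - Q₂ s|) (μ := ν)]
          with s hs
        have := ENNReal.toReal_mono hEtop hs
        rwa [ENNReal.toReal_ofReal (abs_nonneg _)] at this
      have hmeas : ∀ (P : Measure ℝ) (_ : IsProbabilityMeasure P) (y : ℝ),
          ν {s : ℝ | sInf {z : ℝ | s ≤ (P (Iic z)).toReal} ≤ y}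
            = ENNReal.ofReal ((P (Iic y)).toReal) := by
        intro P hP y
        rw [hν, Measure.restrict_apply' measurableSet_Ioo, inter_comm]
        have hset : Ioo (0:ℝ) 1 ∩ {s : ℝ | sInf {z : ℝ | s ≤ (P (Iic z)).toReal} ≤ y}
            = Ioo (0:ℝ) 1 ∩ Iic ((P (Iic y)).toReal) := by
          ext s
          simp only [mem_inter_iff, mem_setOf_eq, mem_Iic, and_congr_right_iff]
          intro hs
          exact qcm_quantile_le_iff P hs.1 hs.2
        rw [hset]
        exact qcm_vol_inter (qcm_F_nonneg P y) (qcm_F_le_one P y)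
      have hdom : ∀ y : ℝ, (P₂ (Iic (y - M))).toReal ≤ (P₁ (Iic y)).toReal := by
        intro y
        have hsub : {s : ℝ | sInf {z : ℝ | s ≤ (P₂ (Iic z)).toReal} ≤ y - M}
            ≤ᵐ[ν] {s : ℝ | sInf {z : ℝ | s ≤ (P₁ (Iic z)).toReal} ≤ y} := by
          filter_upwards [hae] with s hs hmem
          have hmem' : Q₂ s ≤ y - M := by rw [hQ₂p s]; exact hmem
          show sInf {z : ℝ | s ≤ (P₁ (Iic z)).toReal} ≤ y
          rw [← hQ₁p s]
          have := (abs_le.1 hs).2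
          linarith
        have h := measure_mono_ae hsub
        rw [hmeas P₂ inferInstance (y - M), hmeas P₁ inferInstance y] at h
        exact (ENNReal.ofReal_le_ofReal_iff (qcm_F_nonneg P₁ y)).1 h
      have hdom' : ∀ y : ℝ, (P₁ (Iic (y - M))).toReal ≤ (P₂ (Iic y)).toReal := by
        intro y
        have hsub : {s : ℝ | sInf {z : ℝ | s ≤ (P₁ (Iic z)).toReal} ≤ y - M}
            ≤ᵐ[ν] {s : ℝ | sInf {z : ℝ | s ≤ (P₂ (Iic z)).toReal} ≤ y} := by
          filter_upwards [hae] with s hs hmem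
          have hmem' : Q₁ s ≤ y - M := by rw [hQ₁p s]; exact hmem
          show sInf {z : ℝ | s ≤ (P₂ (Iic z)).toReal} ≤ y
          rw [← hQ₂p s]
          have := (abs_le.1 hs).1
          linarith
        have h := measure_mono_ae hsub
        rw [hmeas P₁ inferInstance (y - M), hmeas P₂ inferInstance y] at h
        exact (ENNReal.ofReal_le_ofReal_iff (qcm_F_nonneg P₂ y)).1 h
      have hq1 : Q₁ t ≤ Q₂ t + M := by
        rw [hQ₁p t, hQ₂p t]
        exact qcm_quantile_dom P₁ P₂ hdom ht.1 ht.2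
      have hq2 : Q₂ t ≤ Q₁ t + M := by
        rw [hQ₁p t, hQ₂p t]
        exact qcm_quantile_dom P₂ P₁ hdom' ht.1 ht.2
      have habs : |Q₁ t - Q₂ t| ≤ M := abs_le.2 ⟨by linarith, by linarith⟩
      calc ENNReal.ofReal |Q₁ t - Q₂ t| ≤ ENNReal.ofReal M := ENNReal.ofReal_le_ofReal habs
        _ = E := ENNReal.ofReal_toReal hEtop
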